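/- Let L ⊆ ℝ^d be a convex polytope containing the origin in its interior, and let S = conv{0, v_1, …, v_d} be a simplex of maximal volume among all simplices with d vertices from the vertex set of L and one vertex at the origin. Then every vertex of L lies in the parallelotope P = ∑_{i=1}^d [−v_i, v_i], and hence L ⊆ P. -/

import Mathlib

open MeasureTheory

theorem max_simplex_parallelotope (d : ℕ)
    (V : Finset (EuclideanSpace ℝ (Fin d)))
    (L : Set (EuclideanSpace ℝ (Fin d)))
    (hLpoly : L = convexHull ℝ (V : Set (EuclideanSpace ℝ (Fin d))))
    (h0 : 0 ∈ interior L)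
    (v : Fin d → EuclideanSpace ℝ (Fin d))
    (hv : ∀ i, v i ∈ L.extremePoints ℝ)
    (hmax : ∀ w : Fin d → EuclideanSpace ℝ (Fin d), (∀ i, w i ∈ L.extremePoints ℝ) →
      volume (convexHull ℝ (insert 0 (Set.range w))) ≤
        volume (convexHull ℝ (insert 0 (Set.range v)))) :
    (∀ x ∈ L.extremePoints ℝ,
        ∃ β : Fin d → ℝ, (∀ i, β i ∈ Set.Icc (-1 : ℝ) 1) ∧ x = ∑ i, β i • v i) ∧
      L ⊆ {x | ∃ β : Fin d → ℝ, (∀ i, β i ∈ Set.Icc (-1 : ℝ) 1) ∧ x = ∑ i, β i • v i} := by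
  classical
  -- basic facts about L
  have hLcomp : IsCompact L := hLpoly ▸ V.finite_toSet.isCompact_convexHull ℝ
  have hLconv : Convex ℝ L := hLpoly ▸ convex_convexHull ℝ _
  have hKM : closure (convexHull ℝ (L.extremePoints ℝ)) = L :=
    closure_convexHull_extremePoints hLcomp hLconv
  have hvolL : 0 < volume L :=
    lt_of_lt_of_le (isOpen_interior.measure_pos volume ⟨0, h0⟩) (measure_mono interior_subset)
  -- a simplex with vertices among extreme points of positive volume exists
  have hexw : ∃ w : Fin d → (EuclideanSpace ℝ (Fin d)), (∀ i, w i ∈ L.extremePoints ℝ) ∧ LinearIndependent ℝ w := by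
    have hspan : Submodule.span ℝ (L.extremePoints ℝ) = ⊤ := by
      by_contra h
      have hz : volume ((Submodule.span ℝ (L.extremePoints ℝ) : Submodule ℝ (EuclideanSpace ℝ (Fin d))) : Set (EuclideanSpace ℝ (Fin d))) = 0 :=
        Measure.addHaar_submodule volume _ h
      have hsub : L ⊆ (Submodule.span ℝ (L.extremePoints ℝ) : Set (EuclideanSpace ℝ (Fin d))) := by
        have h1 : convexHull ℝ (L.extremePoints ℝ) ⊆
            (Submodule.span ℝ (L.extremePoints ℝ) : Set (EuclideanSpace ℝ (Fin d))) :=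
          convexHull_min Submodule.subset_span (Submodule.span ℝ _).convex
        exact Set.Subset.trans hKM.ge (closure_minimal h1
          (Submodule.span ℝ (L.extremePoints ℝ)).closed_of_finiteDimensional)
      exact absurd (measure_mono_null hsub hz) (ne_of_gt hvolL)
    obtain ⟨b, hbsub, hbspan, hbli⟩ := exists_linearIndependent ℝ (L.extremePoints ℝ)
    rw [hspan] at hbspan
    have B : Module.Basis b ℝ (EuclideanSpace ℝ (Fin d)) := Module.Basis.mk hbli (by rw [Subtype.range_coe, hbspan])
    haveI : Fintype b := FiniteDimensional.fintypeBasisIndex B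
    have hcard : Fintype.card b = d := by
      have := Module.finrank_eq_card_basis B
      rw [finrank_euclideanSpace_fin] at this
      exact this.symm
    let e := Fintype.equivFinOfCardEq hcard
    exact ⟨fun i => ↑(e.symm i), fun i => hbsub (e.symm i).2, hbli.comp e.symm e.symm.injective⟩
  obtain ⟨w, hwext, hwli⟩ := hexw
  -- positivity of simplex volume for linearly independent families
  have hpos : ∀ u : Fin d → (EuclideanSpace ℝ (Fin d)), LinearIndependent ℝ u →
      0 < volume (convexHull ℝ (insert 0 (Set.range u))) := by
    intro u hu
    have hspanu : Submodule.span ℝ (Set.range u) = ⊤ := by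
      apply Submodule.eq_top_of_finrank_eq
      rw [finrank_span_eq_card hu, finrank_euclideanSpace_fin]
      simp
    have haff : affineSpan ℝ (insert 0 (Set.range u)) = ⊤ := by
      have h2 := affineSpan_insert_zero (k := ℝ) (Set.range u)
      rw [hspanu] at h2
      exact (AffineSubspace.ext_iff _ _).mpr (by rw [h2]; simp)
    have hconv : Convex ℝ (convexHull ℝ (insert 0 (Set.range u))) := convex_convexHull ℝ _
    have hne : (interior (convexHull ℝ (insert 0 (Set.range u)))).Nonempty := by
      rw [hconv.interior_nonempty_iff_affineSpan_eq_top, affineSpan_convexHull]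
      exact haff
    exact lt_of_lt_of_le (isOpen_interior.measure_pos volume hne)
      (measure_mono interior_subset)
  -- the maximal simplex has positive, finite volume
  have hposv : 0 < volume (convexHull ℝ (insert 0 (Set.range v))) :=
    lt_of_lt_of_le (hpos w hwli) (hmax w hwext)
  have hfinv : volume (convexHull ℝ (insert 0 (Set.range v))) < ⊤ :=
    (((Set.finite_range v).insert 0).isCompact_convexHull ℝ).measure_lt_top
  -- v is linearly independent
  have hvli : LinearIndependent ℝ v := by
    apply linearIndependent_of_top_le_span_of_card_eq_finrank _
      (by rw [finrank_euclideanSpace_fin]; simp)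
    by_contra h
    have hne : Submodule.span ℝ (Set.range v) ≠ ⊤ := fun he => h (he ▸ le_rfl)
    have hz : volume ((Submodule.span ℝ (Set.range v) : Submodule ℝ (EuclideanSpace ℝ (Fin d))) : Set (EuclideanSpace ℝ (Fin d))) = 0 :=
      Measure.addHaar_submodule volume _ hne
    have hsub : convexHull ℝ (insert 0 (Set.range v)) ⊆
        (Submodule.span ℝ (Set.range v) : Set (EuclideanSpace ℝ (Fin d))) := by
      apply convexHull_min _ (Submodule.span ℝ _).convex
      exact Set.insert_subset (Submodule.zero_mem _) Submodule.subset_span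
    exact absurd (measure_mono_null hsub hz) (ne_of_gt hposv)
  -- v forms a basis
  let bv : Module.Basis (Fin d) ℝ (EuclideanSpace ℝ (Fin d)) := Module.Basis.mk hvli (by
    rw [← Submodule.eq_top_of_finrank_eq (by rw [finrank_span_eq_card hvli]; simp)])
  have hbv : ⇑bv = v := Module.Basis.coe_mk _ _
  -- key exchange argument: coordinates of extreme points are in [-1, 1]
  have key : ∀ x ∈ L.extremePoints ℝ, ∀ i, |bv.repr x i| ≤ 1 := by
    intro x hx i
    by_contra hgt
    push_neg at hgt
    set β : Fin d → ℝ := fun k => bv.repr x k with hβ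
    have hxsum : x = ∑ k, β k • bv k := (bv.sum_repr x).symm
    set w' : Fin d → (EuclideanSpace ℝ (Fin d)) := Function.update v i x with hw'
    have hw'ext : ∀ j, w' j ∈ L.extremePoints ℝ := by
      intro j
      rcases eq_or_ne j i with rfl | hj
      · simpa [hw'] using hx
      · simpa [hw', Function.update_of_ne hj] using hv j
    set f : (EuclideanSpace ℝ (Fin d)) →ₗ[ℝ] (EuclideanSpace ℝ (Fin d)) := bv.constr ℝ w' with hf
    have hfv : ∀ j, f (v j) = w' j := by
      intro j
      have := bv.constr_basis ℝ w' j
      rwa [hbv] at this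
    have himg : f '' (convexHull ℝ (insert 0 (Set.range v)))
        = convexHull ℝ (insert 0 (Set.range w')) := by
      rw [f.image_convexHull]
      congr 1
      rw [Set.image_insert_eq, map_zero, ← Set.range_comp,
        show ⇑f ∘ v = w' from funext hfv]
    have hdet : LinearMap.det f = β i := by
      have h1 : bv.det (⇑f ∘ ⇑bv) = LinearMap.det f := by
        rw [Module.Basis.det_comp_basis]; simp
      have h2 : ⇑f ∘ ⇑bv = Function.update ⇑bv i (∑ k, β k • bv k) := by
        funext j
        rcases eq_or_ne j i with rfl | hj
        · simp only [Function.comp_apply, Function.update_self, hbv]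
          rw [hfv j, hw', Function.update_self, hxsum, hbv]
        · simp only [Function.comp_apply, Function.update_of_ne hj, hbv]
          rw [hfv j, hw', Function.update_of_ne hj]
      rw [← h1, h2]
      rw [show (∑ k, β k • bv k) = ∑ k ∈ Finset.univ, β k • bv k from rfl]
      rw [AlternatingMap.map_update_sum]
      rw [Finset.sum_eq_single i]
      · simp [Function.update_eq_self, Module.Basis.det_self]
      · intro k _ hk
        rw [(bv.det).map_update_smul]
        have : (bv.det) (Function.update (⇑bv) i (bv k)) = 0 := by
          apply AlternatingMap.map_eq_zero_of_eq _ _ (i := i) (j := k)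
          · simp [Function.update_self, Function.update_of_ne hk]
          · exact Ne.symm hk
        rw [this, smul_zero]
      · simp
    have hvol : volume (convexHull ℝ (insert 0 (Set.range w')))
        = ENNReal.ofReal |β i| * volume (convexHull ℝ (insert 0 (Set.range v))) := by
      rw [← himg, Measure.addHaar_image_linearMap, hdet]
    have hlt : volume (convexHull ℝ (insert 0 (Set.range v)))
        < volume (convexHull ℝ (insert 0 (Set.range w'))) := by
      rw [hvol]
      have h1 : (1 : ENNReal) < ENNReal.ofReal |β i| := by
        rw [show (1 : ENNReal) = ENNReal.ofReal 1 by simp]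
        exact (ENNReal.ofReal_lt_ofReal_iff (lt_trans one_pos hgt)).mpr hgt
      calc volume (convexHull ℝ (insert 0 (Set.range v)))
          = 1 * volume (convexHull ℝ (insert 0 (Set.range v))) := (one_mul _).symm
        _ < ENNReal.ofReal |β i| * volume (convexHull ℝ (insert 0 (Set.range v))) := by
            rw [mul_comm 1, mul_comm (ENNReal.ofReal _)]
            exact ENNReal.mul_lt_mul_right (ne_of_gt hposv) (ne_of_lt hfinv) h1
    exact absurd (hmax w' hw'ext) (not_le.mpr hlt)
  -- part 1
  have part1 : ∀ x ∈ L.extremePoints ℝ,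
      ∃ β : Fin d → ℝ, (∀ i, β i ∈ Set.Icc (-1 : ℝ) 1) ∧ x = ∑ i, β i • v i := by
    intro x hx
    refine ⟨fun i => bv.repr x i, fun i => ?_, ?_⟩
    · rw [Set.mem_Icc, ← abs_le]
      exact key x hx i
    · have := (bv.sum_repr x).symm
      rwa [hbv] at this
  refine ⟨part1, ?_⟩
  -- part 2: the parallelotope is closed and convex
  set P : Set (EuclideanSpace ℝ (Fin d)) := {x | ∃ β : Fin d → ℝ, (∀ i, β i ∈ Set.Icc (-1 : ℝ) 1) ∧ x = ∑ i, β i • v i}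
    with hP
  set T : (Fin d → ℝ) →ₗ[ℝ] (EuclideanSpace ℝ (Fin d)) := ∑ i, (LinearMap.proj i).smulRight (v i) with hT
  have hTapp : ∀ β : Fin d → ℝ, T β = ∑ i, β i • v i := by
    intro β
    simp [hT, LinearMap.sum_apply]
  have hPimg : P = T '' (Set.univ.pi fun _ => Set.Icc (-1 : ℝ) 1) := by
    ext x
    simp only [hP, Set.mem_setOf_eq, Set.mem_image, Set.mem_pi, Set.mem_univ, forall_true_left,
      true_implies]
    constructor
    · rintro ⟨β, h1, h2⟩; exact ⟨β, fun i => h1 i, by rw [hTapp, ← h2]⟩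
    · rintro ⟨β, h1, h2⟩; exact ⟨β, fun i => h1 i, by rw [← h2, hTapp]⟩
  have hPconv : Convex ℝ P := by
    rw [hPimg]
    exact (convex_pi fun i _ => convex_Icc _ _).linear_image T
  have hPclosed : IsClosed P := by
    rw [hPimg]
    exact ((isCompact_univ_pi fun i => isCompact_Icc).image
      T.continuous_of_finiteDimensional).isClosed
  have hEP : L.extremePoints ℝ ⊆ P := fun x hx => part1 x hx
  calc L = closure (convexHull ℝ (L.extremePoints ℝ)) := hKM.symm
    _ ⊆ P := closure_minimal (convexHull_min hEP hPconv) hPclosed
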